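/- Let τ and τ̂ be measurable real functions of X with h* = 1(τ > 0), ĥ* = 1(τ̂ > 0). Under the margin condition P[|τ(X)| ≤ t] ≤ C t^a for all t ≥ 0 (C, a > 0), for every t > 0: E[(ĥ*(X) - h*(X))²] ≤ C t^a + ‖τ̂ - τ‖_{L₁}/t, where ‖τ̂ - τ‖_{L₁} = E|τ̂(X) - τ(X)|. In particular, if ‖τ̂ - τ‖_{L₂} → 0 then ‖ĥ* - h*‖_{L₂} → 0. -/

import Mathlib

open MeasureTheory Filter ENNReal

private lemma ind_sq_le {x y t : ℝ} (ht : 0 < t) :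
    ((if 0 < y then (1:ℝ) else 0) - (if 0 < x then (1:ℝ) else 0)) ^ 2
      ≤ (if |x| ≤ t then (1:ℝ) else 0) + (if t ≤ |y - x| then (1:ℝ) else 0) := by
  have h2 : (0:ℝ) ≤ (if |x| ≤ t then (1:ℝ) else 0) := by split_ifs <;> norm_num
  rcases le_or_gt t (|y - x|) with hB | hB
  · rw [if_pos hB]
    have h1 : ((if 0 < y then (1:ℝ) else 0) - (if 0 < x then (1:ℝ) else 0)) ^ 2 ≤ 1 := by
      split_ifs <;> norm_num
    linarith
  · rw [if_neg (not_le.mpr hB)]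
    by_cases hy : 0 < y <;> by_cases hx : 0 < x
    · rw [if_pos hy, if_pos hx]
      nlinarith [h2]
    · have hxt : |x| ≤ t := by
        have hle : |x| ≤ |y - x| := by
          rw [abs_of_nonpos (not_lt.mp hx), abs_of_pos (by linarith [not_lt.mp hx] : 0 < y - x)]
          linarith [not_lt.mp hx]
        linarith
      rw [if_pos hy, if_neg hx, if_pos hxt]
      norm_num
    · have hxt : |x| ≤ t := by
        have hle : |x| ≤ |y - x| := by
          rw [abs_of_pos hx, abs_of_neg (by linarith [not_lt.mp hy] : y - x < 0)]
          linarith [not_lt.mp hy]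
        linarith
      rw [if_neg hy, if_pos hx, if_pos hxt]
      norm_num
    · rw [if_neg hy, if_neg hx]
      nlinarith [h2]

private lemma core_bound {Ω 𝒳 : Type*} [MeasurableSpace Ω] [MeasurableSpace 𝒳]
    (P : Measure Ω) [IsProbabilityMeasure P]
    (X : Ω → 𝒳) (hX : Measurable X)
    (τ : 𝒳 → ℝ) (hτ : Measurable τ)
    (C a : ℝ)
    (hmargin : ∀ t ≥ (0 : ℝ), (P {ω | |τ (X ω)| ≤ t}).toReal ≤ C * t ^ a)
    (τh : 𝒳 → ℝ) (hτh : Measurable τh)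
    (hint : Integrable (fun ω => τh (X ω) - τ (X ω)) P)
    (t : ℝ) (ht : 0 < t) :
    (∫ ω, ((if 0 < τh (X ω) then (1 : ℝ) else 0)
        - (if 0 < τ (X ω) then (1 : ℝ) else 0)) ^ 2 ∂P)
      ≤ C * t ^ a + (∫ ω, |τh (X ω) - τ (X ω)| ∂P) / t := by
  set f : Ω → ℝ := fun ω => τh (X ω) - τ (X ω) with hf
  have hfm : Measurable f := (hτh.comp hX).sub (hτ.comp hX)
  have hA : MeasurableSet {ω | |τ (X ω)| ≤ t} :=
    measurableSet_le (hτ.comp hX).abs measurable_const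
  have hB : MeasurableSet {ω | t ≤ |f ω|} :=
    measurableSet_le measurable_const hfm.abs
  -- measurability of the difference of indicators, squared
  have hdm : Measurable (fun ω => ((if 0 < τh (X ω) then (1 : ℝ) else 0)
      - (if 0 < τ (X ω) then (1 : ℝ) else 0)) ^ 2) := by
    apply Measurable.pow _ measurable_const
    exact Measurable.sub
      (Measurable.ite (measurableSet_lt measurable_const (hτh.comp hX))
        measurable_const measurable_const)
      (Measurable.ite (measurableSet_lt measurable_const (hτ.comp hX))
        measurable_const measurable_const)
  have hdint : Integrable (fun ω => ((if 0 < τh (X ω) then (1 : ℝ) else 0)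
      - (if 0 < τ (X ω) then (1 : ℝ) else 0)) ^ 2) P := by
    refine (integrable_const (1:ℝ)).mono' hdm.aestronglyMeasurable (ae_of_all _ fun ω => ?_)
    rw [Real.norm_eq_abs]
    split_ifs <;> norm_num
  have hgA : Integrable (fun ω => if |τ (X ω)| ≤ t then (1:ℝ) else 0) P := by
    refine (integrable_const (1:ℝ)).mono'
      (Measurable.ite hA measurable_const measurable_const).aestronglyMeasurable
      (ae_of_all _ fun ω => ?_)
    rw [Real.norm_eq_abs]; split_ifs <;> norm_num
  have hgB : Integrable (fun ω => if t ≤ |f ω| then (1:ℝ) else 0) P := by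
    refine (integrable_const (1:ℝ)).mono'
      (Measurable.ite hB measurable_const measurable_const).aestronglyMeasurable
      (ae_of_all _ fun ω => ?_)
    rw [Real.norm_eq_abs]; split_ifs <;> norm_num
  have step1 : (∫ ω, ((if 0 < τh (X ω) then (1 : ℝ) else 0)
      - (if 0 < τ (X ω) then (1 : ℝ) else 0)) ^ 2 ∂P)
      ≤ ∫ ω, ((if |τ (X ω)| ≤ t then (1:ℝ) else 0)
          + (if t ≤ |f ω| then (1:ℝ) else 0)) ∂P := by
    refine integral_mono hdint (hgA.add hgB) fun ω => ?_
    exact ind_sq_le ht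
  have eqA : (∫ ω, (if |τ (X ω)| ≤ t then (1:ℝ) else 0) ∂P)
      = (P {ω | |τ (X ω)| ≤ t}).toReal := by
    rw [← measureReal_def, ← integral_indicator_one hA]
    refine integral_congr_ae (ae_of_all _ fun ω => ?_)
    simp [Set.indicator_apply, Set.mem_setOf_eq]
  have eqB : (∫ ω, (if t ≤ |f ω| then (1:ℝ) else 0) ∂P)
      = (P {ω | t ≤ |f ω|}).toReal := by
    rw [← measureReal_def, ← integral_indicator_one hB]
    refine integral_congr_ae (ae_of_all _ fun ω => ?_)
    simp [Set.indicator_apply, Set.mem_setOf_eq]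
  have markov : (P {ω | t ≤ |f ω|}).toReal ≤ (∫ ω, |f ω| ∂P) / t := by
    rw [le_div_iff₀ ht]
    have := mul_meas_ge_le_integral_of_nonneg (μ := P)
      (f := fun ω => |f ω|) (ae_of_all _ fun ω => abs_nonneg _) hint.abs t
    rw [measureReal_def] at this
    linarith [this]
  calc (∫ ω, ((if 0 < τh (X ω) then (1 : ℝ) else 0)
      - (if 0 < τ (X ω) then (1 : ℝ) else 0)) ^ 2 ∂P)
      ≤ ∫ ω, ((if |τ (X ω)| ≤ t then (1:ℝ) else 0)
          + (if t ≤ |f ω| then (1:ℝ) else 0)) ∂P := step1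
    _ = (P {ω | |τ (X ω)| ≤ t}).toReal + (P {ω | t ≤ |f ω|}).toReal := by
        rw [integral_add hgA hgB, eqA, eqB]
    _ ≤ C * t ^ a + (∫ ω, |f ω| ∂P) / t :=
        add_le_add (hmargin t ht.le) markov

theorem stmt_19 {Ω 𝒳 : Type*} [MeasurableSpace Ω] [MeasurableSpace 𝒳]
    (P : Measure Ω) [IsProbabilityMeasure P]
    (X : Ω → 𝒳) (hX : Measurable X)
    (τ : 𝒳 → ℝ) (hτ : Measurable τ)
    (C a : ℝ) (hC : 0 < C) (ha : 0 < a)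
    (hmargin : ∀ t ≥ (0 : ℝ), (P {ω | |τ (X ω)| ≤ t}).toReal ≤ C * t ^ a) :
    (∀ τh : 𝒳 → ℝ, Measurable τh →
      Integrable (fun ω => τh (X ω) - τ (X ω)) P →
      ∀ t > (0 : ℝ),
        (∫ ω, ((if 0 < τh (X ω) then (1 : ℝ) else 0)
            - (if 0 < τ (X ω) then (1 : ℝ) else 0)) ^ 2 ∂P)
          ≤ C * t ^ a + (∫ ω, |τh (X ω) - τ (X ω)| ∂P) / t)
    ∧ (∀ τseq : ℕ → 𝒳 → ℝ, (∀ n, Measurable (τseq n)) →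
        Tendsto (fun n => eLpNorm (fun ω => τseq n (X ω) - τ (X ω)) 2 P) atTop (nhds 0) →
        Tendsto (fun n => eLpNorm (fun ω =>
            (if 0 < τseq n (X ω) then (1 : ℝ) else 0)
              - (if 0 < τ (X ω) then (1 : ℝ) else 0)) 2 P) atTop (nhds 0)) := by
  constructor
  · intro τh hτh hint t ht
    exact core_bound P X hX τ hτ C a hmargin τh hτh hint t ht
  · intro τseq hms hL2
    set f : ℕ → Ω → ℝ := fun n ω => τseq n (X ω) - τ (X ω) with hfdef
    set d : ℕ → Ω → ℝ := fun n ω =>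
      (if 0 < τseq n (X ω) then (1 : ℝ) else 0)
        - (if 0 < τ (X ω) then (1 : ℝ) else 0) with hddef
    have hfm : ∀ n, Measurable (f n) := fun n => ((hms n).comp hX).sub (hτ.comp hX)
    have hdm : ∀ n, Measurable (d n) := fun n =>
      Measurable.sub
        (Measurable.ite (measurableSet_lt measurable_const ((hms n).comp hX))
          measurable_const measurable_const)
        (Measurable.ite (measurableSet_lt measurable_const (hτ.comp hX))
          measurable_const measurable_const)
    have hdsqint : ∀ n, Integrable (fun ω => (d n ω) ^ 2) P := fun n => by
      refine (integrable_const (1:ℝ)).mono'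
        ((hdm n).pow measurable_const).aestronglyMeasurable (ae_of_all _ fun ω => ?_)
      rw [Real.norm_eq_abs]
      simp only [hddef]
      split_ifs <;> norm_num
    -- L1 norms tend to zero
    have hL1 : Tendsto (fun n => eLpNorm (f n) 1 P) atTop (nhds 0) := by
      refine tendsto_of_tendsto_of_tendsto_of_le_of_le tendsto_const_nhds hL2
        (fun n => zero_le) (fun n => ?_)
      exact eLpNorm_le_eLpNorm_of_exponent_le (by norm_num) (hfm n).aestronglyMeasurable
    have hIntEv : ∀ᶠ n in atTop, Integrable (f n) P := by
      filter_upwards [hL1.eventually_lt_const (by norm_num : (0:ℝ≥0∞) < 1)] with n hn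
      exact memLp_one_iff_integrable.mp ⟨(hfm n).aestronglyMeasurable, hn.trans_le le_top⟩
    have hJ : Tendsto (fun n => (eLpNorm (f n) 1 P).toReal) atTop (nhds 0) := by
      have := (ENNReal.tendsto_toReal (by simp : (0:ℝ≥0∞) ≠ ⊤)).comp hL1
      exact this
    -- the key: ∫ (d n)² → 0
    have hI : Tendsto (fun n => ∫ ω, (d n ω) ^ 2 ∂P) atTop (nhds 0) := by
      rw [NormedAddCommGroup.tendsto_nhds_zero]
      intro ε hε
      set t : ℝ := (ε / (2 * C)) ^ a⁻¹ with htdef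
      have htpos : 0 < t := Real.rpow_pos_of_pos (by positivity) _
      have hta : C * t ^ a = ε / 2 := by
        rw [htdef, ← Real.rpow_mul (by positivity), inv_mul_cancel₀ (ne_of_gt ha),
          Real.rpow_one]
        field_simp
      have hsmall : ∀ᶠ n in atTop, (eLpNorm (f n) 1 P).toReal < ε / 2 * t := by
        have := hJ.eventually_lt_const (by positivity : (0:ℝ) < ε / 2 * t)
        exact this
      filter_upwards [hIntEv, hsmall] with n hn hs
      have habs : (∫ ω, |f n ω| ∂P) = (eLpNorm (f n) 1 P).toReal := by
        rw [eLpNorm_one_eq_lintegral_enorm,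
          ← integral_norm_eq_lintegral_enorm (hfm n).aestronglyMeasurable]
        simp [Real.norm_eq_abs]
      have hb := core_bound P X hX τ hτ C a hmargin (τseq n) (hms n) hn t htpos
      have hnn : (0:ℝ) ≤ ∫ ω, (d n ω) ^ 2 ∂P :=
        integral_nonneg fun ω => sq_nonneg _
      rw [Real.norm_eq_abs, abs_of_nonneg hnn]
      have : (∫ ω, |f n ω| ∂P) / t < ε / 2 := by
        rw [div_lt_iff₀ htpos, habs]
        linarith [hs]
      calc (∫ ω, (d n ω) ^ 2 ∂P) ≤ C * t ^ a + (∫ ω, |f n ω| ∂P) / t := hb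
        _ < ε / 2 + ε / 2 := by rw [hta]; linarith
        _ = ε := by ring
    -- convert to eLpNorm 2 convergence
    have key : ∀ n, eLpNorm (d n) 2 P
        = (ENNReal.ofReal (∫ ω, (d n ω) ^ 2 ∂P)) ^ (1/2 : ℝ) := by
      intro n
      have hpt : ∀ ω, ((‖d n ω‖₊ : ℝ≥0∞)) ^ (2:ℝ) = ENNReal.ofReal ((d n ω) ^ 2) := by
        intro ω
        rw [← enorm_eq_nnnorm, ← ofReal_norm, ENNReal.ofReal_rpow_of_nonneg (norm_nonneg _) (by norm_num)]
        congr 1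
        rw [Real.rpow_two, Real.norm_eq_abs, sq_abs]
      rw [eLpNorm_eq_lintegral_rpow_enorm_toReal (by norm_num) (by norm_num)]
      simp only [ENNReal.toReal_ofNat, enorm_eq_nnnorm]
      rw [lintegral_congr hpt, ← ofReal_integral_eq_lintegral_ofReal (hdsqint n)
        (ae_of_all _ fun ω => sq_nonneg _)]
    have hrw : (fun n => eLpNorm (fun ω =>
        (if 0 < τseq n (X ω) then (1 : ℝ) else 0)
          - (if 0 < τ (X ω) then (1 : ℝ) else 0)) 2 P)
        = fun n => (ENNReal.ofReal (∫ ω, (d n ω) ^ 2 ∂P)) ^ (1/2 : ℝ) := by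
      funext n
      exact key n
    rw [hrw]
    have h1 : Tendsto (fun n => ENNReal.ofReal (∫ ω, (d n ω) ^ 2 ∂P)) atTop (nhds 0) := by
      have := (ENNReal.continuous_ofReal.tendsto 0).comp hI
      rw [ENNReal.ofReal_zero] at this
      exact this
    have h2 : Tendsto (fun n => (ENNReal.ofReal (∫ ω, (d n ω) ^ 2 ∂P)) ^ (1/2 : ℝ))
        atTop (nhds ((0:ℝ≥0∞) ^ (1/2 : ℝ))) :=
      ((ENNReal.continuous_rpow_const (y := (1/2:ℝ))).tendsto (0:ℝ≥0∞)).comp h1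
    simpa [ENNReal.zero_rpow_of_pos (by norm_num : (0:ℝ) < 1/2)] using h2
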